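/- Every monotone (nondecreasing with respect to the coordinatewise order) function f : ℝ^d → {0,1} is Lebesgue measurable; equivalently, the upper set {x ∈ ℝ^d : f(x) = 1} is a Lebesgue measurable subset of ℝ^d. -/
import Mathlib

/-- Every monotone Boolean function on `ℝ^d` is Lebesgue measurable: its upper
set `{x : f x = 1}` is a (null-)measurable subset of `ℝ^d`. -/
theorem stmt_6 (d : ℕ) (f : (Fin d → ℝ) → Bool)
    (hf : ∀ x y : Fin d → ℝ, x ≤ y → f x = true → f y = true) :
    MeasureTheory.NullMeasurableSet {x : Fin d → ℝ | f x = true}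
      MeasureTheory.volume := by
  have hu : IsUpperSet {x : Fin d → ℝ | f x = true} := fun x y hxy hx => hf x y hxy hx
  exact hu.ordConnected.nullMeasurableSet
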